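/- Let (V, d) be a metric space, P a finite nonempty subset, and c* a point of V. Let C_P minimize cost(P, p) = Σ_{x∈P} d(x, p)² over p ∈ V. Then |P| · d(C_P, c*) ≤ 2·√(|P| · cost(P, c*)). -/

import Mathlib

theorem center_dist_bound {V : Type*} [MetricSpace V]
    (P : Finset V) (hPne : P.Nonempty) (cstar CP : V)
    (hCP : ∀ p : V, ∑ x ∈ P, dist x CP ^ 2 ≤ ∑ x ∈ P, dist x p ^ 2) :
    (P.card : ℝ) * dist CP cstar ≤
      2 * Real.sqrt ((P.card : ℝ) * ∑ x ∈ P, dist x cstar ^ 2) := by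
  have hcard : (0:ℝ) ≤ (P.card : ℝ) := Nat.cast_nonneg _
  -- Cauchy–Schwarz helper: Σ d(x,p) ≤ √(n Σ d(x,p)²)
  have key : ∀ p : V, ∑ x ∈ P, dist x p ≤
      Real.sqrt ((P.card : ℝ) * ∑ x ∈ P, dist x p ^ 2) := by
    intro p
    have h := sq_sum_le_card_mul_sum_sq (s := P) (f := fun x => dist x p)
    have hs : 0 ≤ ∑ x ∈ P, dist x p :=
      Finset.sum_nonneg fun x _ => dist_nonneg
    calc ∑ x ∈ P, dist x p
        = Real.sqrt ((∑ x ∈ P, dist x p) ^ 2) := (Real.sqrt_sq hs).symm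
      _ ≤ Real.sqrt ((P.card : ℝ) * ∑ x ∈ P, dist x p ^ 2) :=
          Real.sqrt_le_sqrt h
  have h1 : (P.card : ℝ) * dist CP cstar ≤
      (∑ x ∈ P, dist x CP) + ∑ x ∈ P, dist x cstar := by
    have : ∀ x ∈ P, dist CP cstar ≤ dist x CP + dist x cstar := by
      intro x _
      calc dist CP cstar ≤ dist CP x + dist x cstar := dist_triangle _ _ _
        _ = dist x CP + dist x cstar := by rw [dist_comm]
    calc (P.card : ℝ) * dist CP cstar = ∑ _x ∈ P, dist CP cstar := by
          rw [Finset.sum_const, nsmul_eq_mul]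
      _ ≤ ∑ x ∈ P, (dist x CP + dist x cstar) := Finset.sum_le_sum this
      _ = _ := Finset.sum_add_distrib
  have h2 : Real.sqrt ((P.card : ℝ) * ∑ x ∈ P, dist x CP ^ 2) ≤
      Real.sqrt ((P.card : ℝ) * ∑ x ∈ P, dist x cstar ^ 2) :=
    Real.sqrt_le_sqrt (mul_le_mul_of_nonneg_left (hCP cstar) hcard)
  calc (P.card : ℝ) * dist CP cstar
      ≤ (∑ x ∈ P, dist x CP) + ∑ x ∈ P, dist x cstar := h1
    _ ≤ Real.sqrt ((P.card : ℝ) * ∑ x ∈ P, dist x CP ^ 2) +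
        Real.sqrt ((P.card : ℝ) * ∑ x ∈ P, dist x cstar ^ 2) :=
          add_le_add (key CP) (key cstar)
    _ ≤ Real.sqrt ((P.card : ℝ) * ∑ x ∈ P, dist x cstar ^ 2) +
        Real.sqrt ((P.card : ℝ) * ∑ x ∈ P, dist x cstar ^ 2) :=
          add_le_add h2 le_rfl
    _ = 2 * Real.sqrt ((P.card : ℝ) * ∑ x ∈ P, dist x cstar ^ 2) := (two_mul _).symm
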